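/- Let μ < ν be valuations on K[x] and let φ ∈ KP(μ) be an MLV key polynomial for μ. If φ ∉ Φ_{μ,ν} and deg φ > deg(μ), then φ is not an (abstract) key polynomial for ν. -/

import Mathlib

open Polynomial

namespace KeyPolPaper

variable {K : Type*} [Field K] {Λ : Type*} [AddCommGroup Λ] [LinearOrder Λ] [IsOrderedAddMonoid Λ]

/-- A valuation on `F[X]` with values in `Λ ∪ {∞}`: multiplicative, satisfies the
ultrametric inequality, and is finite on nonzero constants. -/
def IsValuation {F : Type*} [Field F] (w : F[X] → WithTop Λ) : Prop :=
  w 0 = ⊤ ∧ (∀ f g : F[X], w (f * g) = w f + w g) ∧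
    (∀ f g : F[X], min (w f) (w g) ≤ w (f + g)) ∧
    ∀ a : F, a ≠ 0 → w (C a) ≠ ⊤

/-- `μ ≤ ν` for valuations on `K[X]`. -/
def ValLE (μ ν : K[X] → WithTop Λ) : Prop := ∀ f : K[X], μ f ≤ ν f

/-- `μ < ν` for valuations on `K[X]`. -/
def ValLT (μ ν : K[X] → WithTop Λ) : Prop := ValLE μ ν ∧ μ ≠ ν

/-- ν-equivalence: `f ∼_ν g` iff `ν (f - g) > ν f`. -/
def VEquiv (ν : K[X] → WithTop Λ) (f g : K[X]) : Prop := ν f < ν (f - g)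

/-- ν-divisibility: `h ∣_ν g` iff `g ∼_ν q * h` for some `q`. -/
def VDvd (ν : K[X] → WithTop Λ) (h g : K[X]) : Prop := ∃ q : K[X], VEquiv ν g (q * h)

/-- MacLane–Vaquié key polynomial: monic, ν-minimal and ν-irreducible. -/
def IsMLVKey (ν : K[X] → WithTop Λ) (φ : K[X]) : Prop :=
  φ.Monic ∧ (∀ f : K[X], f ≠ 0 → f.natDegree < φ.natDegree → ¬ VDvd ν φ f) ∧
    ¬ VDvd ν φ 1 ∧ ∀ f g : K[X], VDvd ν φ (f * g) → VDvd ν φ f ∨ VDvd ν φ g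

/-- `e` is the value `ε(f) = max_{b ≥ 1} (ν f - ν (∂_b f)) / b`; phrased multiplicatively,
`e` satisfies `ν f ≤ ν (∂_b f) + b • e` for all `b ≥ 1`, with equality for some `b ≥ 1`.
If `ν f = ∞` then `ε(f) = ∞`. -/
def IsEps (ν : K[X] → WithTop Λ) (f : K[X]) (e : WithTop Λ) : Prop :=
  (ν f = ⊤ ∧ e = ⊤) ∨
    (ν f ≠ ⊤ ∧ (∀ b : ℕ, 1 ≤ b → ν f ≤ ν (hasseDeriv b f) + b • e) ∧
      ∃ b : ℕ, 1 ≤ b ∧ ν f = ν (hasseDeriv b f) + b • e)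

/-- The invariant `ε(f)`; well defined (for non-constant `f`) since `Λ` is divisible and
the defining property determines `e` uniquely. -/
noncomputable def eps (ν : K[X] → WithTop Λ) (f : K[X]) : WithTop Λ :=
  letI := Classical.propDecidable (∃ e : WithTop Λ, IsEps ν f e)
  if h : ∃ e : WithTop Λ, IsEps ν f e then h.choose else ⊤

/-- The set `I(f)` of indices `b ≥ 1` with `ν (∂_b f) = ν f - b • ε(f)`. -/
def epsAttain (ν : K[X] → WithTop Λ) (f : K[X]) : Set ℕ :=
  {b : ℕ | 1 ≤ b ∧ ν f = ν (hasseDeriv b f) + b • eps ν f}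

/-- Abstract key polynomial for `ν`. -/
def IsKeyPoly (ν : K[X] → WithTop Λ) (Q : K[X]) : Prop :=
  Q.Monic ∧ 0 < Q.natDegree ∧
    ∀ f : K[X], 0 < f.natDegree → f.natDegree < Q.natDegree → eps ν f < eps ν Q

/-- The `s`-th coefficient of the canonical `Q`-expansion `f = Σ_s a_s Q^s`,
`deg a_s < deg Q`. -/
noncomputable def qCoeff (Q f : K[X]) (s : ℕ) : K[X] := ((· /ₘ Q)^[s] f) %ₘ Q

/-- The truncation `ν_Q (f) = min_s ν (a_s Q^s)`. -/
noncomputable def trunc (ν : K[X] → WithTop Λ) (Q f : K[X]) : WithTop Λ :=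
  (Finset.range (f.natDegree + 1)).inf fun s => ν (qCoeff Q f s * Q ^ s)

/-- `S_{ν,Q}(f)`: the set of indices attaining the minimum in `ν_Q(f)`. -/
def attain (ν : K[X] → WithTop Λ) (Q f : K[X]) : Set ℕ :=
  {s : ℕ | ν (qCoeff Q f s * Q ^ s) = trunc ν Q f}

/-- The augmented valuation `[μ; φ, γ] (f) = min_s (μ (a_s) + s • γ)` on φ-expansions. -/
noncomputable def augVal (μ : K[X] → WithTop Λ) (φ : K[X]) (γ : WithTop Λ) (f : K[X]) :
    WithTop Λ :=
  (Finset.range (f.natDegree + 1)).inf fun s => μ (qCoeff φ f s) + s • γ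

/-- `Φ_{μ,ν}`: monic polynomials of minimal degree with `μ φ < ν φ`. -/
def PhiSet (μ ν : K[X] → WithTop Λ) : Set K[X] :=
  {φ : K[X] | φ.Monic ∧ μ φ < ν φ ∧
    ∀ ψ : K[X], ψ.Monic → μ ψ < ν ψ → φ.natDegree ≤ ψ.natDegree}

/-- `mult f`: the least `b ≥ 1` with `∂_b f ≠ 0`. -/
noncomputable def multOf (f : K[X]) : ℕ := sInf {b : ℕ | 1 ≤ b ∧ hasseDeriv b f ≠ 0}

/-- Abstract limit key polynomial for `ν` (conditions (K1)-(K4)). -/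
def IsLimitKeyPoly (ν : K[X] → WithTop Λ) (Q : K[X]) : Prop :=
  Q.Monic ∧
    ∃ Qm : K[X], IsKeyPoly ν Qm ∧ ValLT (trunc ν Qm) ν ∧
      (∃ χ ∈ PhiSet (trunc ν Qm) ν, Qm.natDegree = χ.natDegree) ∧
      (∀ χ ∈ PhiSet (trunc ν Qm) ν, ∃ χ' ∈ PhiSet (trunc ν Qm) ν, ν χ < ν χ') ∧
      (∀ χ ∈ PhiSet (trunc ν Qm) ν, trunc ν χ Q < ν Q) ∧
      ∀ Q' : K[X], Q'.Monic →
        (∀ χ ∈ PhiSet (trunc ν Qm) ν, trunc ν χ Q' < ν Q') → Q.natDegree ≤ Q'.natDegree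

/-- A continuous MacLane chain of stable degree `m`: valuations `ρ_0 < ρ_1 < ⋯`,
monic key polynomials `χ_i` (for `i ≥ 1`) of degree `m`, with
`ρ_i = [ρ_{i-1}; χ_i, β_i]`, `β_i = ρ_i (χ_i) > ρ_{i-1} (χ_i)` and
`χ_{i+1} ∤_{ρ_i} χ_i`. -/
structure MacLaneChain (K : Type*) [Field K] (Λ : Type*) [AddCommGroup Λ] [LinearOrder Λ] [IsOrderedAddMonoid Λ] where
  m : ℕ
  hm : 0 < m
  ρ : ℕ → K[X] → WithTop Λ
  χ : ℕ → K[X]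
  β : ℕ → Λ
  isVal : ∀ i : ℕ, IsValuation (ρ i)
  mono : ∀ i : ℕ, ValLT (ρ i) (ρ (i + 1))
  monicChi : ∀ i : ℕ, (χ (i + 1)).Monic
  degChi : ∀ i : ℕ, (χ (i + 1)).natDegree = m
  keyChi : ∀ i : ℕ, IsMLVKey (ρ i) (χ (i + 1))
  beta_def : ∀ i : ℕ, ρ (i + 1) (χ (i + 1)) = (β (i + 1) : WithTop Λ)
  beta_lt : ∀ i : ℕ, ρ i (χ (i + 1)) < (β (i + 1) : WithTop Λ)
  aug : ∀ i : ℕ, ρ (i + 1) = augVal (ρ i) (χ (i + 1)) (β (i + 1) : WithTop Λ)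
  not_dvd : ∀ i : ℕ, ¬ VDvd (ρ (i + 1)) (χ (i + 2)) (χ (i + 1))

/-- A polynomial is stable w.r.t. the chain if its values `ρ_i f` are eventually constant. -/
def MacLaneChain.Stable (ch : MacLaneChain K Λ) (f : K[X]) : Prop :=
  ∃ i0 : ℕ, ∀ i : ℕ, i0 ≤ i → ch.ρ i f = ch.ρ i0 f

/-- The chain is essential: non-stable polynomials exist and all have degree `> m`. -/
def MacLaneChain.Essential (ch : MacLaneChain K Λ) : Prop :=
  (∃ f : K[X], ¬ ch.Stable f) ∧ ∀ f : K[X], ¬ ch.Stable f → ch.m < f.natDegree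

/-- MLV limit key polynomials of the chain: monic non-stable polynomials of minimal
degree `m_∞`. -/
def MacLaneChain.IsLimKP (ch : MacLaneChain K Λ) (φ : K[X]) : Prop :=
  φ.Monic ∧ ¬ ch.Stable φ ∧ ∀ f : K[X], ¬ ch.Stable f → φ.natDegree ≤ f.natDegree

/-- Convex subgroup of a linearly ordered abelian group. -/
def IsConvexSubgroup (H : AddSubgroup Λ) : Prop :=
  ∀ x y : Λ, 0 < x → x < y → y ∈ H → x ∈ H

/-- The value group of a valuation: the subgroup of `Λ` generated by the finite values. -/
def valueGroup {F : Type*} [Field F] (ρ : F[X] → WithTop Λ) : AddSubgroup Λ :=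
  AddSubgroup.closure {γ : Λ | ∃ f : F[X], ρ f = (γ : WithTop Λ)}


variable [Module ℚ Λ]

section Stmt7Aux
set_option linter.unusedSectionVars false


variable {w μ ν : K[X] → WithTop Λ}

/-! ### WithTop arithmetic helpers -/

lemma wtop_nsmul_coe (n : ℕ) (a : Λ) : n • ((a : WithTop Λ)) = ((n • a : Λ) : WithTop Λ) := by
  induction n with
  | zero => simp
  | succ n ih => rw [succ_nsmul, succ_nsmul, ih, WithTop.coe_add]

lemma wtop_nsmul_top {n : ℕ} (hn : 1 ≤ n) : n • (⊤ : WithTop Λ) = ⊤ := by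
  obtain ⟨m, rfl⟩ : ∃ m, n = m + 1 := ⟨n - 1, by omega⟩
  rw [succ_nsmul, add_top]

lemma wtop_nsmul_le (n : ℕ) {a b : WithTop Λ} (h : a ≤ b) : n • a ≤ n • b := by
  rcases eq_or_ne b ⊤ with rfl | hb
  · rcases Nat.eq_zero_or_pos n with rfl | hn
    · simp
    · rw [wtop_nsmul_top hn]; exact le_top
  · have ha : a ≠ ⊤ := ne_top_of_le_ne_top hb h
    lift a to Λ using ha
    lift b to Λ using hb
    rw [wtop_nsmul_coe, wtop_nsmul_coe, WithTop.coe_le_coe]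
    exact nsmul_le_nsmul_right (WithTop.coe_le_coe.mp h) n

lemma nsmul_lt_nsmul_of_lt {n : ℕ} (hn : 1 ≤ n) {a b : Λ} (h : a < b) : n • a < n • b := by
  have h1 : (0:Λ) < b - a := sub_pos.mpr h
  have h2 : (1:ℕ) • (b - a) ≤ n • (b - a) := nsmul_le_nsmul_left h1.le hn
  rw [one_nsmul] at h2
  have h3 : (0:Λ) < n • (b - a) := lt_of_lt_of_le h1 h2
  calc n • a < n • a + n • (b - a) := lt_add_of_pos_right _ h3
  _ = n • (a + (b - a)) := (nsmul_add a (b-a) n).symm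
  _ = n • b := by rw [add_sub_cancel]

lemma wtop_nsmul_lt {n : ℕ} (hn : 1 ≤ n) {a b : WithTop Λ} (h : a < b) (hb : b ≠ ⊤) :
    n • a < n • b := by
  have ha : a ≠ ⊤ := ne_top_of_lt h
  lift a to Λ using ha
  lift b to Λ using hb
  rw [wtop_nsmul_coe, wtop_nsmul_coe, WithTop.coe_lt_coe]
  exact nsmul_lt_nsmul_of_lt hn (WithTop.coe_lt_coe.mp h)

lemma wtop_add_lt_add {a b A B : WithTop Λ} (ha : a ≠ ⊤) (hb : b ≠ ⊤)
    (h1 : a ≤ A) (h2 : b ≤ B) (h3 : a < A ∨ b < B) : a + b < A + B := by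
  rcases eq_or_ne A ⊤ with rfl | hA
  · rw [top_add]
    exact (WithTop.add_ne_top.mpr ⟨ha, hb⟩).lt_top
  rcases eq_or_ne B ⊤ with rfl | hB
  · rw [add_top]
    exact (WithTop.add_ne_top.mpr ⟨ha, hb⟩).lt_top
  lift a to Λ using ha; lift b to Λ using hb; lift A to Λ using hA; lift B to Λ using hB
  have h1' : a ≤ A := by exact_mod_cast h1
  have h2' : b ≤ B := by exact_mod_cast h2
  rw [← WithTop.coe_add, ← WithTop.coe_add, WithTop.coe_lt_coe]
  rcases h3 with h3 | h3
  · exact add_lt_add_of_lt_of_le (by exact_mod_cast h3) h2'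
  · exact add_lt_add_of_le_of_lt h1' (by exact_mod_cast h3)

/-! ### Valuation helpers -/

lemma halve_zero {a : Λ} (h : a + a = 0) : a = 0 := by
  rcases lt_trichotomy a 0 with h4 | h4 | h4
  · have h5 : a + a < 0 := by simpa using add_lt_add h4 h4
    exact absurd h h5.ne
  · exact h4
  · have h5 : (0:Λ) < a + a := by simpa using add_lt_add h4 h4
    exact absurd h h5.ne'

lemma IsValuation.one_eq (hw : IsValuation w) : w 1 = 0 := by
  have h := hw.2.1 1 1
  rw [one_mul] at h
  have hne : w 1 ≠ ⊤ := by
    have := hw.2.2.2 1 one_ne_zero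
    rwa [map_one] at this
  lift w 1 to Λ using hne with a ha
  have h2 : a = a + a := by exact_mod_cast h
  have h2 : a = a + a := by exact_mod_cast h
  have h3 : a = 0 := left_eq_add.mp h2
  exact_mod_cast h3

lemma IsValuation.neg_eq (hw : IsValuation w) (f : K[X]) : w (-f) = w f := by
  have hm1 : w (-1 : K[X]) = 0 := by
    have h := hw.2.1 (-1) (-1)
    rw [neg_one_mul, neg_neg, hw.one_eq] at h
    have hne : w (-1 : K[X]) ≠ ⊤ := by
      have := hw.2.2.2 (-1) (by norm_num)
      rwa [map_neg, map_one] at this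
    lift w (-1 : K[X]) to Λ using hne with a ha
    have h2 : a + a = (0:Λ) := by exact_mod_cast h.symm
    have h3 : a = 0 := halve_zero h2
    exact_mod_cast h3
  calc w (-f) = w ((-1) * f) := by rw [neg_one_mul]
  _ = w (-1) + w f := hw.2.1 _ _
  _ = w f := by rw [hm1, zero_add]

lemma IsValuation.add_eq_left (hw : IsValuation w) {f g : K[X]} (h : w f < w g) :
    w (f + g) = w f := by
  refine le_antisymm ?_ ?_
  · by_contra hc
    push_neg at hc
    have h2 := hw.2.2.1 (f + g) (-g)
    rw [add_neg_cancel_right, hw.neg_eq] at h2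
    rcases min_le_iff.mp h2 with h3 | h3
    · exact absurd h3 (not_le.mpr hc)
    · exact absurd h3 (not_le.mpr h)
  · have h2 := hw.2.2.1 f g
    rwa [min_eq_left h.le] at h2

lemma IsValuation.sub_eq_left (hw : IsValuation w) {f g : K[X]} (h : w f < w g) :
    w (f - g) = w f := by
  rw [sub_eq_add_neg]
  exact hw.add_eq_left (by rwa [hw.neg_eq])

lemma IsValuation.sum_lt (hw : IsValuation w) {ι : Type*} {s : Finset ι} {F : ι → K[X]}
    {B d : WithTop Λ} (hB : B ≠ ⊤) (h : ∀ i ∈ s, B < w (F i) + d) :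
    B < w (∑ i ∈ s, F i) + d := by
  classical
  induction s using Finset.induction_on with
  | empty =>
      rw [Finset.sum_empty, hw.1, top_add]
      exact hB.lt_top
  | insert _ _ hx ih =>
      rename_i a s
      rw [Finset.sum_insert hx]
      have h1 := h a (Finset.mem_insert_self a s)
      have h2 : B < w (∑ i ∈ s, F i) + d := ih (fun i hi => h i (Finset.mem_insert_of_mem hi))
      calc B < min (w (F a) + d) (w (∑ i ∈ s, F i) + d) := lt_min h1 h2
      _ = min (w (F a)) (w (∑ i ∈ s, F i)) + d := min_add_add_right _ _ _
      _ ≤ w (F a + ∑ i ∈ s, F i) + d := add_le_add (hw.2.2.1 _ _) le_rfl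

lemma const_agree (hμ : IsValuation μ) (hν : IsValuation ν) (hle : ValLE μ ν) (c : K) :
    μ (C c) = ν (C c) := by
  rcases eq_or_ne c 0 with rfl | hc
  · rw [map_zero, hμ.1, hν.1]
  · have h1 : μ (C c) + μ (C c⁻¹) = 0 := by
      rw [← hμ.2.1, ← map_mul, mul_inv_cancel₀ hc, map_one, hμ.one_eq]
    have h2 : ν (C c) + ν (C c⁻¹) = 0 := by
      rw [← hν.2.1, ← map_mul, mul_inv_cancel₀ hc, map_one, hν.one_eq]
    have ha : μ (C c) ≠ ⊤ := hμ.2.2.2 c hc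
    have hb : μ (C c⁻¹) ≠ ⊤ := hμ.2.2.2 _ (inv_ne_zero hc)
    have ha' : ν (C c) ≠ ⊤ := hν.2.2.2 c hc
    have hb' : ν (C c⁻¹) ≠ ⊤ := hν.2.2.2 _ (inv_ne_zero hc)
    have hle1 := hle (C c)
    have hle2 := hle (C c⁻¹)
    lift μ (C c) to Λ using ha with x
    lift μ (C c⁻¹) to Λ using hb with y
    lift ν (C c) to Λ using ha' with x'
    lift ν (C c⁻¹) to Λ using hb' with y'
    have e1 : x + y = 0 := by exact_mod_cast h1
    have e2 : x' + y' = 0 := by exact_mod_cast h2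
    have e3 : x ≤ x' := by exact_mod_cast hle1
    have e4 : y ≤ y' := by exact_mod_cast hle2
    have hx : x = -y := eq_neg_of_add_eq_zero_left e1
    have hx' : x' = -y' := eq_neg_of_add_eq_zero_left e2
    have h5 : x' ≤ x := by rw [hx, hx']; exact neg_le_neg e4
    have h6 : x = x' := le_antisymm e3 h5
    exact_mod_cast h6


/-! ### eps lemmas -/

lemma coe_untop'_eq {a : WithTop Λ} (h : a ≠ ⊤) : ((a.untopD 0 : Λ) : WithTop Λ) = a := by
  lift a to Λ using h
  rfl

lemma eps_isEps {f : K[X]} (hex : ∃ e : WithTop Λ, IsEps ν f e) : IsEps ν f (eps ν f) := by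
  unfold eps
  rw [dif_pos hex]
  exact hex.choose_spec

lemma eps_eq_top_of_top {f : K[X]} (h : ν f = ⊤) : eps ν f = ⊤ := by
  have hex : ∃ e : WithTop Λ, IsEps ν f e := ⟨⊤, Or.inl ⟨h, rfl⟩⟩
  rcases eps_isEps hex with ⟨_, h3⟩ | ⟨h3, _⟩
  · exact h3
  · exact absurd h h3

lemma eps_exists (hν : IsValuation ν) {f : K[X]} (hf : 0 < f.natDegree)
    (htop : ν f ≠ ⊤) : ∃ e : WithTop Λ, IsEps ν f e := by
  classical
  have hf0 : f ≠ 0 := by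
    intro h
    rw [h, natDegree_zero] at hf
    omega
  set N := f.natDegree with hN
  have hD : hasseDeriv N f = C (f.coeff N) := by
    ext m
    rw [hasseDeriv_coeff, coeff_C]
    rcases eq_or_ne m 0 with rfl | hm
    · simp
    · rw [coeff_eq_zero_of_natDegree_lt (by omega : f.natDegree < m + N)]
      simp [hm]
  have hcN : f.coeff N ≠ 0 := by
    rw [hN, ← leadingCoeff]
    exact leadingCoeff_ne_zero.mpr hf0
  have hDtop : ν (hasseDeriv N f) ≠ ⊤ := by rw [hD]; exact hν.2.2.2 _ hcN
  set B : Finset ℕ := (Finset.range (N + 1)).filter (fun b => 1 ≤ b ∧ ν (hasseDeriv b f) ≠ ⊤)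
    with hBdef
  have hNB : N ∈ B := by
    rw [hBdef, Finset.mem_filter, Finset.mem_range]
    exact ⟨by omega, hf, hDtop⟩
  set x : Λ := (ν f).untopD 0 with hxdef
  have hx : (x : WithTop Λ) = ν f := coe_untop'_eq htop
  set F : ℕ → Λ := fun b => (b : ℚ)⁻¹ • (x - (ν (hasseDeriv b f)).untopD 0) with hFdef
  have hBne : (B.image F).Nonempty := ⟨F N, Finset.mem_image_of_mem F hNB⟩
  set e₀ : Λ := (B.image F).max' hBne with he₀
  have hsmulF : ∀ b ∈ B, b • (F b) = x - (ν (hasseDeriv b f)).untopD 0 := by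
    intro b hb
    rw [hBdef, Finset.mem_filter] at hb
    have hb1 : (b : ℚ) ≠ 0 := Nat.cast_ne_zero.mpr (by omega)
    rw [hFdef]
    simp only
    rw [← Nat.cast_smul_eq_nsmul ℚ b, smul_smul, mul_inv_cancel₀ hb1, one_smul]
  have hkey : ∀ b ∈ B, (ν f ≤ ν (hasseDeriv b f) + b • (e₀ : WithTop Λ)) ∧
      (F b = e₀ → ν f = ν (hasseDeriv b f) + b • (e₀ : WithTop Λ)) := by
    intro b hb
    have hbB := hb
    rw [hBdef, Finset.mem_filter] at hbB
    obtain ⟨hbr, hb1, hbtop⟩ := hbB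
    set y : Λ := (ν (hasseDeriv b f)).untopD 0 with hydef
    have hy : (y : WithTop Λ) = ν (hasseDeriv b f) := coe_untop'_eq hbtop
    have hFle : F b ≤ e₀ := Finset.le_max' _ _ (Finset.mem_image_of_mem F hb)
    have h2 : b • F b ≤ b • e₀ := nsmul_le_nsmul_right hFle b
    rw [hsmulF b hb] at h2
    constructor
    · rw [← hy, ← hx, wtop_nsmul_coe, ← WithTop.coe_add, WithTop.coe_le_coe]
      exact sub_le_iff_le_add'.mp h2
    · intro hFb
      rw [← hy, ← hx, wtop_nsmul_coe, ← WithTop.coe_add, WithTop.coe_inj]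
      have h3 : b • e₀ = x - y := by rw [← hFb]; exact hsmulF b hb
      rw [h3, add_comm, sub_add_cancel]
  refine ⟨(e₀ : WithTop Λ), Or.inr ⟨htop, ?_, ?_⟩⟩
  · intro b hb1
    by_cases hbB : b ∈ B
    · exact (hkey b hbB).1
    · rcases eq_or_ne (ν (hasseDeriv b f)) ⊤ with h6 | h6
      · rw [h6, top_add]; exact le_top
      · have hbN : N < b := by
          by_contra hc
          push_neg at hc
          exact hbB (by rw [hBdef, Finset.mem_filter, Finset.mem_range]; exact ⟨by omega, hb1, h6⟩)
        exact absurd (by rw [hasseDeriv_eq_zero_of_lt_natDegree f b hbN]; exact hν.1) h6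
  · obtain ⟨bs, hbsB, hFbs⟩ := Finset.mem_image.mp (Finset.max'_mem (B.image F) hBne)
    have hb1 : 1 ≤ bs := by
      have := hbsB
      rw [hBdef, Finset.mem_filter] at this
      exact this.2.1
    exact ⟨bs, hb1, (hkey bs hbsB).2 hFbs⟩

/-! ### qCoeff lemmas -/

lemma qCoeff_zero (Q f : K[X]) : qCoeff Q f 0 = f %ₘ Q := rfl

lemma qCoeff_succ (Q f : K[X]) (s : ℕ) : qCoeff Q f (s + 1) = qCoeff Q (f /ₘ Q) s := by
  unfold qCoeff
  rw [Function.iterate_succ_apply]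

lemma qCoeff_zero_poly (Q : K[X]) (s : ℕ) : qCoeff Q 0 s = 0 := by
  induction s with
  | zero => rw [qCoeff_zero]; exact zero_modByMonic Q
  | succ s ih => rw [qCoeff_succ, zero_divByMonic]; exact ih

lemma qCoeff_natDegree_lt {Q : K[X]} (hQ : Q.Monic) (hQ1 : Q ≠ 1) (f : K[X]) (s : ℕ) :
    (qCoeff Q f s).natDegree < Q.natDegree := by
  unfold qCoeff
  exact natDegree_modByMonic_lt _ hQ hQ1

lemma qCoeff_expand {Q : K[X]} (hQ : Q.Monic) (hdQ : 0 < Q.natDegree) :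
    ∀ (M : ℕ) (f : K[X]), f.natDegree < M → f = ∑ s ∈ Finset.range M, qCoeff Q f s * Q ^ s := by
  intro M
  induction M with
  | zero => intro f hf; exact absurd hf (Nat.not_lt_zero _)
  | succ M ih =>
    intro f hf
    have hQ0 : Q ≠ 0 := hQ.ne_zero
    by_cases hfQ : degree f < degree Q
    · have h1 : f %ₘ Q = f := (modByMonic_eq_self_iff hQ).mpr hfQ
      have h2 : f /ₘ Q = 0 := (divByMonic_eq_zero_iff hQ).mpr hfQ
      rw [Finset.sum_range_succ']
      have h3 : ∀ s : ℕ, qCoeff Q f (s + 1) = 0 := by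
        intro s
        rw [qCoeff_succ, h2, qCoeff_zero_poly]
      simp only [h3, zero_mul, Finset.sum_const_zero, zero_add, qCoeff_zero, h1, pow_zero,
        mul_one]
    · push_neg at hfQ
      set q := f /ₘ Q with hq
      have hf0 : f ≠ 0 := by
        intro h
        rw [h, degree_zero] at hfQ
        exact hQ0 (degree_eq_bot.mp (le_bot_iff.mp hfQ))
      have hQle : Q.natDegree ≤ f.natDegree := natDegree_le_natDegree hfQ
      have hqd : q.natDegree < M := by
        rw [hq, natDegree_divByMonic f hQ]
        omega
      have hrec := ih q hqd
      rw [Finset.sum_range_succ']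
      have hstep : ∀ s : ℕ, qCoeff Q f (s + 1) = qCoeff Q q s := fun s => qCoeff_succ Q f s
      calc f = f %ₘ Q + Q * q := (modByMonic_add_div f Q).symm
      _ = (∑ s ∈ Finset.range M, qCoeff Q q s * Q ^ s) * Q + f %ₘ Q := by
          rw [← hrec]; ring
      _ = (∑ s ∈ Finset.range M, qCoeff Q f (s + 1) * Q ^ (s + 1)) + qCoeff Q f 0 * Q ^ 0 := by
          rw [Finset.sum_mul, qCoeff_zero, pow_zero, mul_one]
          congr 1
          apply Finset.sum_congr rfl
          intro s _
          rw [hstep s, pow_succ, mul_assoc]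

/-! ### expansion bounds -/

lemma fb_mu (hμ : IsValuation μ) {χ : K[X]} (hχ : χ.Monic) (hd : 0 < χ.natDegree)
    (hmin : ∀ f : K[X], f ≠ 0 → f.natDegree < χ.natDegree → ¬ VDvd μ χ f) :
    ∀ (N : ℕ) (f : K[X]), f.natDegree ≤ N → ∀ s : ℕ, μ f ≤ μ (qCoeff χ f s * χ ^ s) := by
  have hχ1 : χ ≠ 1 := by
    intro h
    rw [h, natDegree_one] at hd
    omega
  have hχdeg : (0 : WithBot ℕ) < degree χ := by
    rw [degree_eq_natDegree hχ.ne_zero]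
    exact_mod_cast hd
  have base : ∀ f : K[X], degree f < degree χ → ∀ s : ℕ, μ f ≤ μ (qCoeff χ f s * χ ^ s) := by
    intro f hfd s
    match s with
    | 0 =>
      rw [qCoeff_zero, (modByMonic_eq_self_iff hχ).mpr hfd, pow_zero, mul_one]
    | s + 1 =>
      rw [qCoeff_succ, (divByMonic_eq_zero_iff hχ).mpr hfd, qCoeff_zero_poly, zero_mul, hμ.1]
      exact le_top
  intro N
  induction N with
  | zero =>
    intro f hfN s
    refine base f ?_ s
    calc degree f ≤ (f.natDegree : WithBot ℕ) := degree_le_natDegree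
    _ ≤ (0 : WithBot ℕ) := by exact_mod_cast hfN
    _ < degree χ := hχdeg
  | succ N ih =>
    intro f hfN s
    by_cases hfd : degree f < degree χ
    · exact base f hfd s
    push_neg at hfd
    set r := f %ₘ χ with hrdef
    set q := f /ₘ χ with hqdef
    have hfeq : r + χ * q = f := modByMonic_add_div f χ
    have hrd : r.natDegree < χ.natDegree := natDegree_modByMonic_lt f hχ hχ1
    have hkey : μ f ≤ μ r ∧ μ f ≤ μ (χ * q) := by
      by_contra hc
      have hcases : μ r < μ f ∨ μ (χ * q) < μ f := by
        rcases not_and_or.mp hc with h | h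
        · exact Or.inl (not_le.mp h)
        · exact Or.inr (not_le.mp h)
      have heq : μ r = μ (χ * q) := by
        by_contra hne
        rcases lt_or_gt_of_ne hne with h | h
        · have h1 : μ f = μ r := by rw [← hfeq]; exact hμ.add_eq_left h
          rcases hcases with h2 | h2
          · exact absurd h1 (h2.ne')
          · exact absurd (h1 ▸ h2) (not_lt.mpr h.le)
        · have h1 : μ f = μ (χ * q) := by
            rw [← hfeq, add_comm]
            exact hμ.add_eq_left h
          rcases hcases with h2 | h2
          · exact absurd (h1 ▸ h2) (not_lt.mpr h.le)
          · exact absurd h1 (h2.ne')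
      have hrlt : μ r < μ f := by
        rcases hcases with h | h
        · exact h
        · exact heq ▸ h
      have hr0 : r ≠ 0 := by
        intro h0
        rw [h0, hμ.1] at hrlt
        exact not_top_lt hrlt
      refine hmin r hr0 hrd ⟨-q, ?_⟩
      show μ r < μ (r - -q * χ)
      have h4 : r - -q * χ = f := by rw [← hfeq]; ring
      rw [h4]
      exact hrlt
    match s with
    | 0 =>
      rw [qCoeff_zero, pow_zero, mul_one]
      exact hkey.1
    | s + 1 =>
      have hQle : χ.natDegree ≤ f.natDegree := natDegree_le_natDegree hfd
      have hqd : q.natDegree ≤ N := by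
        rw [hqdef, natDegree_divByMonic f hχ]
        omega
      have hIH := ih q hqd s
      rw [qCoeff_succ]
      have hrw : qCoeff χ q s * χ ^ (s + 1) = qCoeff χ q s * χ ^ s * χ := by ring
      rw [hrw, hμ.2.1]
      calc μ f ≤ μ (χ * q) := hkey.2
      _ = μ χ + μ q := hμ.2.1 χ q
      _ = μ q + μ χ := add_comm _ _
      _ ≤ μ (qCoeff χ q s * χ ^ s) + μ χ := add_le_add hIH le_rfl

/-! ### minimality of elements of Φ and consequences -/

lemma phi_min (hμ : IsValuation μ) (hν : IsValuation ν) (hle : ValLE μ ν) {χ : K[X]}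
    (hχlt : μ χ < ν χ) (hagree : ∀ f : K[X], f.natDegree < χ.natDegree → μ f = ν f) :
    ∀ f : K[X], f ≠ 0 → f.natDegree < χ.natDegree → ¬ VDvd μ χ f := by
  rintro f hf0 hfd ⟨q, hq⟩
  -- hq : μ f < μ (f - q * χ)
  set g := f - q * χ with hgdef
  have hfμν : μ f = ν f := hagree f hfd
  have hftop : μ f ≠ ⊤ := ne_top_of_lt hq
  have hνftop : ν f ≠ ⊤ := hfμν ▸ hftop
  have hνg : ν f < ν g := lt_of_lt_of_le (hfμν ▸ hq) (hle g)
  have hmin2 : min (ν g) (ν (q * χ)) ≤ ν f := by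
    have h := hν.2.2.1 g (q * χ)
    rwa [show g + q * χ = f by rw [hgdef]; ring] at h
  have hq2 : ν (q * χ) ≤ ν f := by
    rcases min_le_iff.mp hmin2 with h | h
    · exact absurd h (not_le.mpr hνg)
    · exact h
  have h3 : ν q + ν χ ≤ ν f := by rw [← hν.2.1]; exact hq2
  have hνq : ν q ≠ ⊤ := by
    intro h
    rw [h, top_add] at h3
    exact hνftop (top_le_iff.mp h3)
  have hνχ : ν χ ≠ ⊤ := by
    intro h
    rw [h, add_top] at h3
    exact hνftop (top_le_iff.mp h3)
  have h4 : μ (q * χ) < ν (q * χ) := by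
    rw [hμ.2.1, hν.2.1]
    exact wtop_add_lt_add (ne_top_of_le_ne_top hνq (hle q)) (ne_top_of_le_ne_top hνχ (hle χ))
      (hle q) hχlt.le (Or.inr hχlt)
  have h5 : min (μ f) (μ (-g)) ≤ μ (q * χ) := by
    have h := hμ.2.2.1 f (-g)
    rwa [show f + -g = q * χ by rw [hgdef]; ring] at h
  have h6 : μ f ≤ μ (q * χ) := by
    rw [hμ.neg_eq] at h5
    rwa [min_eq_left hq.le] at h5
  have h7 : μ f < μ f := by
    calc μ f ≤ μ (q * χ) := h6
    _ < ν (q * χ) := h4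
    _ ≤ ν f := hq2
    _ = μ f := hfμν.symm
  exact lt_irrefl _ h7

lemma irred_contra (hμ : IsValuation μ) {φ χ : K[X]} (hφ : IsMLVKey μ φ)
    (hχ : χ.Monic) (hd : 0 < χ.natDegree) (hdn : χ.natDegree < φ.natDegree)
    (hμφtop : μ φ ≠ ⊤) (hlt : μ φ < μ (φ %ₘ χ)) : False := by
  set r := φ %ₘ χ with hrdef
  set q := φ /ₘ χ with hqdef
  have hfeq : r + χ * q = φ := modByMonic_add_div φ χ
  have h5 : min (μ φ) (μ (-r)) ≤ μ (χ * q) := by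
    have h := hμ.2.2.1 φ (-r)
    rwa [show φ + -r = χ * q by rw [← hfeq]; ring] at h
  have h6 : μ φ ≤ μ (χ * q) := by
    rw [hμ.neg_eq] at h5
    rwa [min_eq_left hlt.le] at h5
  have h7 : min (μ (χ * q)) (μ r) ≤ μ φ := by
    have h := hμ.2.2.1 (χ * q) r
    rwa [show χ * q + r = φ by rw [← hfeq]; ring] at h
  have h8 : μ (χ * q) ≤ μ φ := by
    rcases min_le_iff.mp h7 with h | h
    · exact h
    · exact absurd h (not_le.mpr hlt)
  have h9 : μ (χ * q) = μ φ := le_antisymm h8 h6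
  have hdvd : VDvd μ φ (q * χ) := by
    refine ⟨1, ?_⟩
    show μ (q * χ) < μ (q * χ - 1 * φ)
    have h10 : q * χ - 1 * φ = -r := by rw [one_mul, ← hfeq]; ring
    rw [h10, hμ.neg_eq, mul_comm q χ, h9]
    exact hlt
  have hq0 : q ≠ 0 := by
    intro h
    rw [h, mul_zero] at h9
    rw [hμ.1] at h9
    exact hμφtop h9.symm
  have hqd : q.natDegree < φ.natDegree := by
    rw [hqdef, natDegree_divByMonic φ hχ]
    omega
  rcases hφ.2.2.2 q χ hdvd with h | h
  · exact hφ.2.1 q hq0 hqd h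
  · exact hφ.2.1 χ hχ.ne_zero hdn h

lemma monic_scale {f : K[X]} (hf0 : f ≠ 0) :
    (C f.leadingCoeff⁻¹ * f).Monic ∧ (C f.leadingCoeff⁻¹ * f).natDegree = f.natDegree := by
  have hlc : f.leadingCoeff ≠ 0 := leadingCoeff_ne_zero.mpr hf0
  constructor
  · rw [Monic, leadingCoeff_mul, leadingCoeff_C]
    exact inv_mul_cancel₀ hlc
  · exact natDegree_C_mul (inv_ne_zero hlc)

lemma exists_chi (hμ : IsValuation μ) (hν : IsValuation ν) (hle : ValLE μ ν)
    (h : ∃ g : K[X], g.Monic ∧ μ g < ν g) :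
    ∃ χ : K[X], χ.Monic ∧ μ χ < ν χ ∧ 0 < χ.natDegree ∧
      (∀ g : K[X], g.Monic → μ g < ν g → χ.natDegree ≤ g.natDegree) ∧
      (∀ f : K[X], f.natDegree < χ.natDegree → μ f = ν f) := by
  classical
  have hPk : ∃ k : ℕ, ∃ g : K[X], g.Monic ∧ g.natDegree = k ∧ μ g < ν g := by
    obtain ⟨g, hgm, hglt⟩ := h
    exact ⟨g.natDegree, g, hgm, rfl, hglt⟩
  obtain ⟨χ, hχm, hχd, hχlt⟩ := Nat.find_spec hPk
  have hmin : ∀ g : K[X], g.Monic → μ g < ν g → χ.natDegree ≤ g.natDegree := by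
    intro g hgm hglt
    rw [hχd]
    exact Nat.find_le ⟨g, hgm, rfl, hglt⟩
  have hpos : 0 < χ.natDegree := by
    by_contra hc
    push_neg at hc
    have h0 : χ.natDegree = 0 := by omega
    have h1 : χ = 1 := hχm.natDegree_eq_zero.mp h0
    rw [h1, hμ.one_eq, hν.one_eq] at hχlt
    exact lt_irrefl _ hχlt
  refine ⟨χ, hχm, hχlt, hpos, hmin, ?_⟩
  intro f hfd
  rcases eq_or_ne f 0 with rfl | hf0
  · rw [hμ.1, hν.1]
  by_contra hne
  have hflt : μ f < ν f := (hle f).lt_of_ne hne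
  obtain ⟨hgm, hgd⟩ := monic_scale hf0
  have hglt : μ (C f.leadingCoeff⁻¹ * f) < ν (C f.leadingCoeff⁻¹ * f) := by
    have hc := const_agree hμ hν hle f.leadingCoeff⁻¹
    rw [hμ.2.1, hν.2.1, hc]
    have hctop : ν (C f.leadingCoeff⁻¹) ≠ ⊤ :=
      hν.2.2.2 _ (inv_ne_zero (leadingCoeff_ne_zero.mpr hf0))
    exact (WithTop.add_lt_add_iff_left hctop).mpr hflt
  have := hmin _ hgm hglt
  rw [hgd] at this
  omega

lemma fb_nu (hμ : IsValuation μ) (hν : IsValuation ν) (hle : ValLE μ ν) {θ : K[X]}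
    (hθ : θ.Monic) (hd : 0 < θ.natDegree)
    (hmin : ∀ f : K[X], f ≠ 0 → f.natDegree < θ.natDegree → ¬ VDvd μ θ f) {n : ℕ}
    (hagree : ∀ g : K[X], g.Monic → g.natDegree < n → μ g = ν g) :
    ∀ (N : ℕ) (f : K[X]), f.natDegree ≤ N → f.Monic → f.natDegree ≤ n → μ f = ν f →
      ∀ s : ℕ, ν f ≤ ν (qCoeff θ f s * θ ^ s) := by
  have hθ1 : θ ≠ 1 := by
    intro h
    rw [h, natDegree_one] at hd
    omega
  have hθdeg : (0 : WithBot ℕ) < degree θ := by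
    rw [degree_eq_natDegree hθ.ne_zero]
    exact_mod_cast hd
  have base : ∀ f : K[X], degree f < degree θ → ∀ s : ℕ, ν f ≤ ν (qCoeff θ f s * θ ^ s) := by
    intro f hfd s
    match s with
    | 0 =>
      rw [qCoeff_zero, (modByMonic_eq_self_iff hθ).mpr hfd, pow_zero, mul_one]
    | s + 1 =>
      rw [qCoeff_succ, (divByMonic_eq_zero_iff hθ).mpr hfd, qCoeff_zero_poly, zero_mul, hν.1]
      exact le_top
  intro N
  induction N with
  | zero =>
    intro f hfN _ _ _ s
    refine base f ?_ s
    calc degree f ≤ (f.natDegree : WithBot ℕ) := degree_le_natDegree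
    _ ≤ (0 : WithBot ℕ) := by exact_mod_cast hfN
    _ < degree θ := hθdeg
  | succ N ih =>
    intro f hfN hfm hfn hfμν s
    by_cases hfd : degree f < degree θ
    · exact base f hfd s
    push_neg at hfd
    set r := f %ₘ θ with hrdef
    set q := f /ₘ θ with hqdef
    have hfeq : r + θ * q = f := modByMonic_add_div f θ
    have hrd : r.natDegree < θ.natDegree := natDegree_modByMonic_lt f hθ hθ1
    have hQle : θ.natDegree ≤ f.natDegree := natDegree_le_natDegree hfd
    have hqm : q.Monic := by
      rw [Monic, hqdef, leadingCoeff_divByMonic_of_monic hθ hfd]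
      exact hfm
    have hqn : q.natDegree < n := by
      rw [hqdef, natDegree_divByMonic f hθ]
      omega
    have hqμν : μ q = ν q := hagree q hqm hqn
    have hkey : ν f ≤ ν r ∧ ν f ≤ ν (θ * q) := by
      by_contra hc
      have hcases : ν r < ν f ∨ ν (θ * q) < ν f := by
        rcases not_and_or.mp hc with h | h
        · exact Or.inl (not_le.mp h)
        · exact Or.inr (not_le.mp h)
      have heq : ν r = ν (θ * q) := by
        by_contra hne
        rcases lt_or_gt_of_ne hne with h | h
        · have h1 : ν f = ν r := by rw [← hfeq]; exact hν.add_eq_left h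
          rcases hcases with h2 | h2
          · exact absurd h1 (h2.ne')
          · exact absurd (h1 ▸ h2) (not_lt.mpr h.le)
        · have h1 : ν f = ν (θ * q) := by
            rw [← hfeq, add_comm]
            exact hν.add_eq_left h
          rcases hcases with h2 | h2
          · exact absurd (h1 ▸ h2) (not_lt.mpr h.le)
          · exact absurd h1 (h2.ne')
      have hrlt : ν r < ν f := by
        rcases hcases with h | h
        · exact h
        · exact heq ▸ h
      have hr0 : r ≠ 0 := by
        intro h0
        rw [h0, hν.1] at hrlt
        exact not_top_lt hrlt
      -- from μ-minimality of θ: μ f ≤ μ r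
      have hmle : μ f ≤ μ r := by
        by_contra hcc
        push_neg at hcc
        refine hmin r hr0 hrd ⟨-q, ?_⟩
        show μ r < μ (r - -q * θ)
        have h4 : r - -q * θ = f := by rw [← hfeq]; ring
        rw [h4]
        exact hcc
      have : ν f < ν f := by
        calc ν f = μ f := hfμν.symm
        _ ≤ μ r := hmle
        _ ≤ ν r := hle r
        _ < ν f := hrlt
      exact lt_irrefl _ this
    match s with
    | 0 =>
      rw [qCoeff_zero, pow_zero, mul_one]
      exact hkey.1
    | s + 1 =>
      have hqN : q.natDegree ≤ N := by
        rw [hqdef, natDegree_divByMonic f hθ]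
        omega
      have hIH := ih q hqN hqm (le_of_lt hqn) hqμν s
      rw [qCoeff_succ]
      have hrw : qCoeff θ q s * θ ^ (s + 1) = qCoeff θ q s * θ ^ s * θ := by ring
      rw [hrw, hν.2.1]
      calc ν f ≤ ν (θ * q) := hkey.2
      _ = ν θ + ν q := hν.2.1 θ q
      _ = ν q + ν θ := add_comm _ _
      _ ≤ ν (qCoeff θ q s * θ ^ s) + ν θ := add_le_add hIH le_rfl

lemma mlv_pos (hμ : IsValuation μ) {ψ : K[X]} (h : IsMLVKey μ ψ) : 0 < ψ.natDegree := by
  by_contra hc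
  push_neg at hc
  have h0 : ψ.natDegree = 0 := by omega
  have h1 : ψ = 1 := h.1.natDegree_eq_zero.mp h0
  refine h.2.2.1 ⟨1, ?_⟩
  show μ 1 < μ (1 - 1 * ψ)
  rw [h1, one_mul, sub_self, hμ.1, hμ.one_eq]
  exact WithTop.coe_lt_top 0

lemma final_contra (hν : IsValuation ν) {φ θ : K[X]} (hkp : IsKeyPoly ν φ)
    (hνφtop : ν φ ≠ ⊤) (hθm : θ.Monic) (hθd : 0 < θ.natDegree)
    (hθn : θ.natDegree < φ.natDegree)
    (hrows : ∀ s : ℕ, ν φ ≤ ν (qCoeff θ φ s * θ ^ s)) : False := by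
  obtain ⟨hmonic, hpos, hsmall⟩ := hkp
  have hθ1 : θ ≠ 1 := by
    intro h
    rw [h, natDegree_one] at hθd
    omega
  have hex := eps_exists hν hpos hνφtop
  have ht := eps_isEps hex
  set t := eps ν φ with htdef
  rcases ht with ⟨h1, _⟩ | ⟨_, hub, b₁, hb₁, heq⟩
  · exact hνφtop h1
  have httop : t ≠ ⊤ := by
    intro h
    rw [h, wtop_nsmul_top hb₁, add_top] at heq
    exact hνφtop heq
  -- strictness property
  set P : K[X] → Prop := fun h => ∀ c : ℕ, 1 ≤ c → ν h < ν (hasseDeriv c h) + c • t with hPdef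
  have hPtop : ∀ h : K[X], P h → ν h ≠ ⊤ := by
    intro h hp
    exact ne_top_of_lt (lt_of_lt_of_le (hp 1 le_rfl) le_top)
  have hne_top_small : ∀ h : K[X], 0 < h.natDegree → h.natDegree < φ.natDegree → ν h ≠ ⊤ := by
    intro h h1 h2 h3
    have h4 := hsmall h h1 h2
    rw [eps_eq_top_of_top h3] at h4
    exact not_top_lt h4
  have hstrict_small : ∀ h : K[X], 0 < h.natDegree → h.natDegree < φ.natDegree → P h := by
    intro h h1 h2 c hc
    have h3 := hne_top_small h h1 h2
    rcases eps_isEps (eps_exists hν h1 h3) with ⟨htop', _⟩ | ⟨_, hub', _⟩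
    · exact absurd htop' h3
    have h4 : eps ν h < t := hsmall h h1 h2
    have h5 := hub' c hc
    rcases eq_or_ne (ν (hasseDeriv c h)) ⊤ with h6 | h6
    · rw [h6, top_add]
      exact h3.lt_top
    · have h7 : c • eps ν h < c • t := wtop_nsmul_lt hc h4 httop
      calc ν h ≤ ν (hasseDeriv c h) + c • eps ν h := h5
      _ < ν (hasseDeriv c h) + c • t := (WithTop.add_lt_add_iff_left h6).mpr h7
  have hPC : ∀ a : K, a ≠ 0 → P (C a) := by
    intro a ha c hc
    rw [hasseDeriv_C c a (by omega), hν.1, top_add]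
    exact (hν.2.2.2 a ha).lt_top
  have hPmul : ∀ f g : K[X], P f → P g → P (f * g) := by
    intro f g hf hg c hc
    have hft := hPtop f hf
    have hgt := hPtop g hg
    have hBne : ν (f * g) ≠ ⊤ := by
      rw [hν.2.1]
      exact WithTop.add_ne_top.mpr ⟨hft, hgt⟩
    rw [hasseDeriv_mul]
    refine hν.sum_lt hBne ?_
    intro ij hij
    have hij2 : ij.1 + ij.2 = c := Finset.HasAntidiagonal.mem_antidiagonal.mp hij
    rw [hν.2.1 f g, hν.2.1 (hasseDeriv ij.1 f) (hasseDeriv ij.2 g)]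
    have hsplit : c • t = ij.1 • t + ij.2 • t := by rw [← hij2, add_nsmul]
    rw [hsplit, add_add_add_comm]
    have key : ∀ (h : K[X]) (i : ℕ), P h →
        ν h ≤ ν (hasseDeriv i h) + i • t ∧ (1 ≤ i → ν h < ν (hasseDeriv i h) + i • t) := by
      intro h i hp
      constructor
      · match i with
        | 0 =>
          rw [hasseDeriv_zero', zero_nsmul, add_zero]
        | i + 1 => exact (hp (i + 1) (by omega)).le
      · intro hi
        exact hp i hi
    have h1 := key f ij.1 hf
    have h2 := key g ij.2 hg
    have hone : 1 ≤ ij.1 ∨ 1 ≤ ij.2 := by omega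
    rcases hone with hi | hj
    · exact wtop_add_lt_add hft hgt h1.1 h2.1 (Or.inl (h1.2 hi))
    · exact wtop_add_lt_add hft hgt h1.1 h2.1 (Or.inr (h2.2 hj))
  have hPsm : ∀ h : K[X], h ≠ 0 → h.natDegree < φ.natDegree → P h := by
    intro h h0 hdlt
    rcases Nat.eq_zero_or_pos h.natDegree with hz | hp2
    · have hC := eq_C_of_natDegree_eq_zero hz
      rw [hC]
      refine hPC _ ?_
      intro hcc
      rw [hcc, map_zero] at hC
      exact h0 hC
    · exact hstrict_small h hp2 hdlt
  set n := φ.natDegree with hndef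
  have hexp : φ = ∑ s ∈ Finset.range (n + 1), qCoeff θ φ s * θ ^ s :=
    qCoeff_expand hθm hθd (n + 1) φ (by omega)
  have hDsum : hasseDeriv b₁ φ = ∑ s ∈ Finset.range (n + 1), hasseDeriv b₁ (qCoeff θ φ s * θ ^ s) := by
    conv_lhs => rw [hexp]
    exact map_sum (hasseDeriv b₁) _ _
  have hPθ : P θ := hPsm θ hθm.ne_zero hθn
  have hPpow : ∀ k : ℕ, P (θ ^ k) := by
    intro k
    induction k with
    | zero =>
      rw [pow_zero]
      have h1 := hPC 1 one_ne_zero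
      rwa [map_one] at h1
    | succ k ihk =>
      rw [pow_succ]
      exact hPmul _ _ ihk hPθ
  have hterm : ∀ s ∈ Finset.range (n + 1), ν φ < ν (hasseDeriv b₁ (qCoeff θ φ s * θ ^ s)) + b₁ • t := by
    intro s _
    rcases eq_or_ne (qCoeff θ φ s) 0 with h0 | h0
    · rw [h0, zero_mul, map_zero, hν.1, top_add]
      exact hνφtop.lt_top
    · have hPA : P (qCoeff θ φ s) :=
        hPsm _ h0 (lt_trans (qCoeff_natDegree_lt hθm hθ1 φ s) hθn)
      have hProw : P (qCoeff θ φ s * θ ^ s) := hPmul _ _ hPA (hPpow s)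
      calc ν φ ≤ ν (qCoeff θ φ s * θ ^ s) := hrows s
      _ < _ := hProw b₁ hb₁
  have hfinal : ν φ < ν (hasseDeriv b₁ φ) + b₁ • t := by
    rw [hDsum]
    exact hν.sum_lt hνφtop hterm
  rw [← heq] at hfinal
  exact lt_irrefl _ hfinal


end Stmt7Aux

/-- if `μ < ν`, `φ ∈ KP(μ)`, `φ ∉ Φ_{μ,ν}` and `deg φ > deg(μ)`, then `φ` is
not an abstract key polynomial for `ν`. -/
theorem stmt7 (μ ν : K[X] → WithTop Λ) (hμ : IsValuation μ) (hν : IsValuation ν)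
    (hlt : ValLT μ ν) (φ : K[X]) (hφ : IsMLVKey μ φ)
    (hnot : φ ∉ PhiSet μ ν)
    (hdeg : ∃ ψ : K[X], IsMLVKey μ ψ ∧ ψ.natDegree < φ.natDegree) :
    ¬ IsKeyPoly ν φ := by
  intro hkp
  have hmonic := hφ.1
  have hle : ValLE μ ν := hlt.1
  have hpos : 0 < φ.natDegree := hkp.2.1
  set n := φ.natDegree with hndef
  rcases (hle φ).lt_or_eq with hB | hDC
  · -- Case B : μ φ < ν φ
    have hμφtop : μ φ ≠ ⊤ := ne_top_of_lt hB
    have hnot2 : ∃ ψ₁ : K[X], ψ₁.Monic ∧ μ ψ₁ < ν ψ₁ ∧ ψ₁.natDegree < n := by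
      by_contra hc
      push_neg at hc
      exact hnot ⟨hmonic, hB, fun ψ' h1 h2 => hc ψ' h1 h2⟩
    obtain ⟨ψ₁, hψ₁m, hψ₁lt, hψ₁d⟩ := hnot2
    obtain ⟨χ, hχm, hχlt, hχpos, hχmin, hagree⟩ := exists_chi hμ hν hle ⟨ψ₁, hψ₁m, hψ₁lt⟩
    have hχn : χ.natDegree < n := lt_of_le_of_lt (hχmin ψ₁ hψ₁m hψ₁lt) hψ₁d
    have hχ1 : χ ≠ 1 := fun h => by rw [h, natDegree_one] at hχpos; omega
    have hclaim : μ φ < μ (φ %ₘ χ) := by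
      by_contra hc
      push_neg at hc
      set r := φ %ₘ χ with hrdef
      set q := φ /ₘ χ with hqdef
      have hfeq : r + χ * q = φ := modByMonic_add_div φ χ
      have hr0 : r ≠ 0 := by
        intro h
        rw [h, hμ.1] at hc
        exact hμφtop (top_le_iff.mp hc)
      have hrd : r.natDegree < χ.natDegree := natDegree_modByMonic_lt φ hχm hχ1
      have hrμν : μ r = ν r := hagree r hrd
      have hνr : ν r < ν φ := lt_of_le_of_lt (hrμν ▸ hc) hB
      have hqχr : ν (χ * q) = ν r := by
        have h1 : ν (-r + φ) = ν r := by
          rw [hν.add_eq_left (by rwa [hν.neg_eq])]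
          exact hν.neg_eq r
        rw [show χ * q = -r + φ by rw [← hfeq]; ring]
        exact h1
      have hνrtop : ν r ≠ ⊤ := ne_top_of_lt hνr
      have h3 : ν χ + ν q = ν r := by rw [← hν.2.1]; exact hqχr
      have hνχ : ν χ ≠ ⊤ := by
        intro h
        rw [h, top_add] at h3
        exact hνrtop h3.symm
      have hνq : ν q ≠ ⊤ := by
        intro h
        rw [h, add_top] at h3
        exact hνrtop h3.symm
      have h4 : μ (χ * q) < ν (χ * q) := by
        rw [hμ.2.1, hν.2.1]
        exact wtop_add_lt_add (ne_top_of_le_ne_top hνχ (hle χ)) (ne_top_of_le_ne_top hνq (hle q))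
          hχlt.le (hle q) (Or.inl hχlt)
      have h5 : μ (χ * q) < μ r := by
        calc μ (χ * q) < ν (χ * q) := h4
        _ = ν r := hqχr
        _ = μ r := hrμν.symm
      have h6 : μ φ = μ (χ * q) := by
        rw [← hfeq, add_comm]
        exact hμ.add_eq_left h5
      rw [h6] at hc
      exact absurd (lt_of_le_of_lt hc h5) (lt_irrefl _)
    exact irred_contra hμ hφ hχm hχpos hχn hμφtop hclaim
  · rcases eq_or_ne (μ φ) ⊤ with hμφ | hμφ
    · -- Case C : μ φ = ν φ = ⊤
      classical
      have hSP : ∃ k : ℕ, ∃ g : K[X], g.Monic ∧ g.natDegree = k ∧ μ g = ⊤ :=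
        ⟨n, φ, hmonic, rfl, hμφ⟩
      obtain ⟨P', hPm, hPd, hPtop⟩ := Nat.find_spec hSP
      have hd'n : Nat.find hSP ≤ n := Nat.find_le ⟨φ, hmonic, rfl, hμφ⟩
      have hd'1 : 1 ≤ Nat.find hSP := by
        by_contra hcc
        push_neg at hcc
        have h0 : P'.natDegree = 0 := by omega
        have h1 : P' = 1 := hPm.natDegree_eq_zero.mp h0
        rw [h1, hμ.one_eq] at hPtop
        exact absurd hPtop (by simp)
      have hsupmin : ∀ g : K[X], g ≠ 0 → μ g = ⊤ → Nat.find hSP ≤ g.natDegree := by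
        intro g hg0 hgtop
        obtain ⟨hgm, hgd⟩ := monic_scale hg0
        have hgtop' : μ (C g.leadingCoeff⁻¹ * g) = ⊤ := by
          rw [hμ.2.1, hgtop, add_top]
        exact Nat.find_le ⟨C g.leadingCoeff⁻¹ * g, hgm, hgd, hgtop'⟩
      by_cases hc : Nat.find hSP < n
      · have h1 := hkp.2.2 P' (by omega) (by omega)
        have hν' : ν P' = ⊤ := top_le_iff.mp (hPtop ▸ hle P')
        rw [eps_eq_top_of_top hν'] at h1
        exact not_top_lt h1
      · push_neg at hc
        have hP1 : P' ≠ 1 := fun h => by rw [h, natDegree_one] at hPd; omega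
        obtain ⟨ψ, hψkey, hψd⟩ := hdeg
        have hψ0 : ψ ≠ 0 := hψkey.1.ne_zero
        have hψtop : μ ψ ≠ ⊤ := by
          intro h
          have h5 := hsupmin ψ hψ0 h
          omega
        have hirr : Irreducible P' := by
          constructor
          · intro hu
            have hdeg0 := degree_eq_zero_of_isUnit hu
            have h8 : P'.natDegree = 0 := natDegree_eq_zero_iff_degree_le_zero.mpr hdeg0.le
            omega
          · intro a b hab
            by_contra hcc
            push_neg at hcc
            obtain ⟨ha, hb⟩ := hcc
            have ha0 : a ≠ 0 := by
              rintro rfl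
              rw [zero_mul] at hab
              exact hPm.ne_zero hab
            have hb0 : b ≠ 0 := by
              rintro rfl
              rw [mul_zero] at hab
              exact hPm.ne_zero hab
            have hunit : ∀ c : K[X], c ≠ 0 → ¬ IsUnit c → 1 ≤ c.natDegree := by
              intro c hc0 hcu
              by_contra hcd
              push_neg at hcd
              have h0 : c.natDegree = 0 := by omega
              have hCc := eq_C_of_natDegree_eq_zero h0
              refine hcu ?_
              rw [hCc]
              refine isUnit_C.mpr (isUnit_iff_ne_zero.mpr ?_)
              intro hz
              exact hc0 (by rw [hCc, hz, map_zero])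
            have had := hunit a ha0 ha
            have hbd := hunit b hb0 hb
            have hdegs : a.natDegree + b.natDegree = P'.natDegree := by
              rw [hab, natDegree_mul ha0 hb0]
            have h6 : μ a = ⊤ ∨ μ b = ⊤ := by
              have h7 := hPtop
              rw [hab, hμ.2.1] at h7
              exact WithTop.add_eq_top.mp h7
            rcases h6 with h | h
            · have := hsupmin a ha0 h; omega
            · have := hsupmin b hb0 h; omega
        have hcop : IsCoprime P' ψ := by
          refine hirr.coprime_iff_not_dvd.mpr ?_
          rintro ⟨c, hc2⟩
          exact hψtop (by rw [hc2, hμ.2.1, hPtop, top_add])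
        obtain ⟨u, v, huv⟩ := hcop
        refine hψkey.2.2.1 ⟨v, ?_⟩
        show μ 1 < μ (1 - v * ψ)
        have h7 : (1 : K[X]) - v * ψ = u * P' := by rw [← huv]; ring
        rw [h7, hμ.2.1, hPtop, add_top, hμ.one_eq]
        exact WithTop.coe_lt_top 0
    · -- Case D : μ φ = ν φ ≠ ⊤
      have hνφtop : ν φ ≠ ⊤ := hDC ▸ hμφ
      obtain ⟨ψ, hψkey, hψd⟩ := hdeg
      have hψpos : 0 < ψ.natDegree := mlv_pos hμ hψkey
      have hrows_mu := fb_mu hμ hψkey.1 hψpos hψkey.2.1 φ.natDegree φ le_rfl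
      have hrows_nu : ∀ s : ℕ, ν φ ≤ ν (qCoeff ψ φ s * ψ ^ s) := by
        intro s
        calc ν φ = μ φ := hDC.symm
        _ ≤ μ (qCoeff ψ φ s * ψ ^ s) := hrows_mu s
        _ ≤ ν (qCoeff ψ φ s * ψ ^ s) := hle _
      exact final_contra hν hkp hνφtop hψkey.1 hψpos hψd hrows_nu


end KeyPolPaper
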